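/- Let λ ∈ ℝ, λ ≠ 0, let T > 0 and S = ℝ × (0,T), and let u : S → ℝ be C³ in x and C¹ in t with continuous mixed derivatives, satisfying the Camassa–Holm equation u_t − u_{txx} + 3uu_x = 2u_xu_{xx} + uu_{xxx} on S; set m = u − u_{xx}. Suppose there exists t₀ ∈ (0,T) such that x ↦ u(x,t₀) is not identically zero, u(x,t₀) → 0 and u_x(x,t₀) → 0 as x → +∞ and as x → −∞, and u_x(·,t₀) is continuous. Then there exist two disjoint open balls B₁, B₂ ⊆ S such that (λ/2 + 1/(2λ) − m(p))·u_x(p) ≠ 0 for every p ∈ B₁ ∪ B₂. -/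

import Mathlib

open Filter Metric Set

/-- Auxiliary lemma: a continuous function `g` with derivative `g'`, decaying at `±∞`,
satisfying `g'² = g(g − 2c)` with `c ≠ 0`, cannot take a positive value. -/
lemma stmt14_aux (c : ℝ) (hc : c ≠ 0) (g g' : ℝ → ℝ) (hgc : Continuous g)
    (hder : ∀ x, HasDerivAt g (g' x) x)
    (htop : Tendsto g atTop (nhds 0)) (hbot : Tendsto g atBot (nhds 0))
    (heq : ∀ x, (g' x) ^ 2 = g x * (g x - 2 * c))
    (x₁ : ℝ) (hx₁ : 0 < g x₁) : False := by
  -- eventually `g x ≤ g x₁` away from compact sets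
  have hev : ∀ᶠ x in cocompact ℝ, g x ≤ g x₁ := by
    rw [cocompact_eq_atBot_atTop, Filter.eventually_sup]
    exact ⟨(hbot.eventually_lt_const hx₁).mono fun x hx => hx.le,
      (htop.eventually_lt_const hx₁).mono fun x hx => hx.le⟩
  obtain ⟨x₀, hx₀⟩ := hgc.exists_forall_ge' x₁ hev
  -- derivative vanishes at the global max
  have hloc : IsLocalMax g x₀ := Filter.Eventually.of_forall hx₀
  have hd0 : g' x₀ = 0 := by
    have := hloc.deriv_eq_zero
    rwa [(hder x₀).deriv] at this
  have hx₀pos : 0 < g x₀ := lt_of_lt_of_le hx₁ (hx₀ x₁)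
  have h2c : g x₀ = 2 * c := by
    have h := heq x₀
    rw [hd0] at h
    have : g x₀ * (g x₀ - 2 * c) = 0 := by linarith [h]
    rcases mul_eq_zero.mp this with h' | h'
    · exact absurd h' (ne_of_gt hx₀pos)
    · linarith
  have hcpos : 0 < c := by linarith
  -- pick a point where g < c
  obtain ⟨y, hy⟩ := (htop.eventually_lt_const hcpos).exists
  -- intermediate value: g attains the forbidden value c
  have hmem : c ∈ Set.uIcc (g x₀) (g y) := by
    rw [Set.mem_uIcc]
    right
    constructor
    · exact hy.le
    · rw [h2c]; linarith
  obtain ⟨z, _, hz⟩ := intermediate_value_uIcc (hgc.continuousOn) hmem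
  have hsq : 0 ≤ g z * (g z - 2 * c) := by rw [← heq z]; positivity
  rw [hz] at hsq
  nlinarith

theorem stmt_14 (lam : ℝ) (hlam : lam ≠ 0) (T : ℝ) (hT : 0 < T)
    (S : Set (ℝ × ℝ)) (hS : S = {p : ℝ × ℝ | p.2 ∈ Set.Ioo 0 T})
    (u ux uxx uxxx ut utxx mm : ℝ × ℝ → ℝ)
    (hux : ∀ p : ℝ × ℝ, ux p = deriv (fun x => u (x, p.2)) p.1)
    (huxx : ∀ p : ℝ × ℝ, uxx p = deriv (fun x => ux (x, p.2)) p.1)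
    (huxxx : ∀ p : ℝ × ℝ, uxxx p = deriv (fun x => uxx (x, p.2)) p.1)
    (hut : ∀ p : ℝ × ℝ, ut p = deriv (fun t => u (p.1, t)) p.2)
    (hutxx : ∀ p : ℝ × ℝ, utxx p = deriv (fun t => uxx (p.1, t)) p.2)
    (hmm : ∀ p : ℝ × ℝ, mm p = u p - uxx p)
    -- regularity on S: C³ in x, C¹ in t, continuous (mixed) derivatives
    (hregx : ∀ t ∈ Set.Ioo (0 : ℝ) T, ContDiff ℝ 3 (fun x => u (x, t)))
    (hregt : ∀ x : ℝ, ContDiffOn ℝ 1 (fun t => u (x, t)) (Set.Ioo 0 T))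
    (hregtxx : ∀ x : ℝ, ContDiffOn ℝ 1 (fun t => uxx (x, t)) (Set.Ioo 0 T))
    (hcont : ContinuousOn u S ∧ ContinuousOn ux S ∧ ContinuousOn uxx S
      ∧ ContinuousOn ut S ∧ ContinuousOn utxx S)
    -- Camassa–Holm equation on S
    (hCH : ∀ p ∈ S,
        ut p - utxx p + 3 * u p * ux p = 2 * ux p * uxx p + u p * uxxx p)
    -- the distinguished time t₀
    (t₀ : ℝ) (ht₀ : t₀ ∈ Set.Ioo (0 : ℝ) T)
    (hnz : ¬ ∀ x : ℝ, u (x, t₀) = 0)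
    (hudecay : Filter.Tendsto (fun x => u (x, t₀)) Filter.atTop (nhds 0)
      ∧ Filter.Tendsto (fun x => u (x, t₀)) Filter.atBot (nhds 0))
    (huxdecay : Filter.Tendsto (fun x => ux (x, t₀)) Filter.atTop (nhds 0)
      ∧ Filter.Tendsto (fun x => ux (x, t₀)) Filter.atBot (nhds 0))
    (huxcont : Continuous (fun x => ux (x, t₀))) :
    ∃ (p₁ p₂ : ℝ × ℝ) (r₁ r₂ : ℝ), 0 < r₁ ∧ 0 < r₂
      ∧ Metric.ball p₁ r₁ ⊆ S ∧ Metric.ball p₂ r₂ ⊆ S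
      ∧ Disjoint (Metric.ball p₁ r₁) (Metric.ball p₂ r₂)
      ∧ ∀ p ∈ Metric.ball p₁ r₁ ∪ Metric.ball p₂ r₂,
          (lam / 2 + 1 / (2 * lam) - mm p) * ux p ≠ 0 := by
  classical
  set c : ℝ := lam / 2 + 1 / (2 * lam) with hcdef
  have hc : c ≠ 0 := by
    intro h
    rw [hcdef] at h
    field_simp at h
    nlinarith [sq_nonneg lam]
  set g : ℝ → ℝ := fun x => u (x, t₀) with hgdef
  have hg3 : ContDiff ℝ 3 g := hregx t₀ ht₀
  have hgd : Differentiable ℝ g := hg3.differentiable (by norm_num)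
  have hux' : ∀ x, ux (x, t₀) = deriv g x := fun x => hux (x, t₀)
  have huxfun : (fun x => ux (x, t₀)) = deriv g := funext hux'
  have huxx' : ∀ x, uxx (x, t₀) = deriv (deriv g) x := by
    intro x
    rw [huxx (x, t₀)]
    simp only [huxfun]
  -- derivative of deriv g exists
  have hg3' : ContDiff ℝ ((2 : WithTop ℕ∞) + 1) g := by
    exact hg3
  have hg'2 : ContDiff ℝ 2 (deriv g) := (contDiff_succ_iff_deriv.mp hg3').2.2
  have hg'd : Differentiable ℝ (deriv g) := hg'2.differentiable (by norm_num)
  -- Step 1: find a point where (c − m)·u_x ≠ 0 at time t₀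
  have hkey : ∃ x₀ : ℝ, (c - mm (x₀, t₀)) * ux (x₀, t₀) ≠ 0 := by
    by_contra hcon
    push_neg at hcon
    -- the product vanishes identically; deduce (g − c)² − g'² is constant
    set F : ℝ → ℝ := fun x => (g x - c) ^ 2 - (deriv g x) ^ 2 with hFdef
    have hF0 : ∀ x, HasDerivAt F 0 x := by
      intro x
      have h1 := (((hgd x).hasDerivAt).sub_const c).pow 2
      have h2 := ((hg'd x).hasDerivAt).pow 2
      have h3 := h1.sub h2
      convert h3 using 1
      · rfl
      · rfl
      · rfl
      have hx := hcon x
      rw [hmm (x, t₀), hux' x, huxx' x] at hx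
      have hx' : (c - (g x - deriv (deriv g) x)) * deriv g x = 0 := hx
      push_cast
      linear_combination (2 : ℝ) * hx'
    have hFd : Differentiable ℝ F := fun x => (hF0 x).differentiableAt
    have hFconst : ∀ x y, F x = F y :=
      is_const_of_deriv_eq_zero hFd (fun x => (hF0 x).deriv)
    -- limit of F at +∞ is c²
    have hFtop : Tendsto F atTop (nhds (c ^ 2)) := by
      have h1 : Tendsto (fun x => (g x - c) ^ 2) atTop (nhds ((0 - c) ^ 2)) :=
        (hudecay.1.sub tendsto_const_nhds).pow 2
      have h2 : Tendsto (fun x => (deriv g x) ^ 2) atTop (nhds ((0 : ℝ) ^ 2)) := by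
        have := huxdecay.1
        rw [huxfun] at this
        exact this.pow 2
      have := h1.sub h2
      convert this using 2
      ring
    have hFeq : ∀ x, F x = c ^ 2 := by
      intro x
      have hconst : Tendsto F atTop (nhds (F x)) := by
        have : F = fun _ => F x := funext fun y => hFconst y x
        rw [this]
        exact tendsto_const_nhds
      exact tendsto_nhds_unique hconst hFtop
    have heq : ∀ x, (deriv g x) ^ 2 = g x * (g x - 2 * c) := by
      intro x
      have h2 : (g x - c) ^ 2 - (deriv g x) ^ 2 = c ^ 2 := hFeq x
      linear_combination (-1 : ℝ) * h2
    -- g is not identically zero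
    push_neg at hnz
    obtain ⟨x₁, hx₁⟩ := hnz
    have hder : ∀ x, HasDerivAt g (deriv g x) x := fun x => (hgd x).hasDerivAt
    rcases lt_or_gt_of_ne hx₁ with hneg | hpos
    · -- apply aux to −g with constant −c
      refine stmt14_aux (-c) (neg_ne_zero.mpr hc) (fun x => -g x) (fun x => -deriv g x)
        (hgd.continuous.neg) (fun x => (hder x).neg)
        (by simpa using hudecay.1.neg) (by simpa using hudecay.2.neg)
        (fun x => by
          show (-deriv g x) ^ 2 = (-g x) * (-g x - 2 * -c)
          linear_combination heq x) x₁ (by simpa using hneg)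
    · exact stmt14_aux c hc g (deriv g) hgd.continuous hder hudecay.1 hudecay.2 heq x₁ hpos
  obtain ⟨x₀, hx₀⟩ := hkey
  -- Step 2: continuity gives a ball around (x₀, t₀), subdivide into two disjoint balls
  have hSopen : IsOpen S := by
    rw [hS]
    exact (isOpen_Ioo).preimage continuous_snd
  set p₀ : ℝ × ℝ := (x₀, t₀) with hp₀def
  have hp₀S : p₀ ∈ S := by rw [hS]; exact ht₀
  set f : ℝ × ℝ → ℝ := fun p => (c - mm p) * ux p with hfdef
  have hfcont : ContinuousOn f S := by
    have hmmfun : mm = fun p => u p - uxx p := funext hmm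
    refine ContinuousOn.mul ?_ hcont.2.1
    refine continuousOn_const.sub ?_
    rw [hmmfun]
    exact hcont.1.sub hcont.2.2.1
  have hfat : ContinuousAt f p₀ := hfcont.continuousAt (hSopen.mem_nhds hp₀S)
  have hfevent : ∀ᶠ p in nhds p₀, f p ≠ 0 := hfat.eventually_ne hx₀
  have hnhds : {p : ℝ × ℝ | f p ≠ 0} ∩ S ∈ nhds p₀ :=
    Filter.inter_mem hfevent (hSopen.mem_nhds hp₀S)
  obtain ⟨ε, hε, hball⟩ := Metric.mem_nhds_iff.mp hnhds
  refine ⟨(x₀ - ε / 4, t₀), (x₀ + ε / 4, t₀), ε / 8, ε / 8, by linarith, by linarith,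
    ?_, ?_, ?_, ?_⟩
  · intro p hp
    have hsub : Metric.ball (x₀ - ε / 4, t₀) (ε / 8) ⊆ Metric.ball p₀ ε := by
      apply Metric.ball_subset_ball'
      have : dist ((x₀ - ε / 4, t₀) : ℝ × ℝ) p₀ ≤ ε / 4 := by
        rw [Prod.dist_eq]
        apply max_le
        · rw [Real.dist_eq]
          rw [show x₀ - ε / 4 - x₀ = -(ε / 4) by ring, abs_neg, abs_of_nonneg (by linarith)]
        · simp [p₀]; linarith
      linarith
    exact (hball (hsub hp)).2
  · intro p hp
    have hsub : Metric.ball (x₀ + ε / 4, t₀) (ε / 8) ⊆ Metric.ball p₀ ε := by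
      apply Metric.ball_subset_ball'
      have : dist ((x₀ + ε / 4, t₀) : ℝ × ℝ) p₀ ≤ ε / 4 := by
        rw [Prod.dist_eq]
        apply max_le
        · rw [Real.dist_eq]
          rw [show x₀ + ε / 4 - x₀ = ε / 4 by ring, abs_of_nonneg (by linarith)]
        · simp [p₀]; linarith
      linarith
    exact (hball (hsub hp)).2
  · apply Metric.ball_disjoint_ball
    have : dist ((x₀ - ε / 4, t₀) : ℝ × ℝ) ((x₀ + ε / 4, t₀)) ≥ ε / 2 := by
      rw [Prod.dist_eq]
      refine le_trans ?_ (le_max_left _ _)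
      rw [Real.dist_eq, show x₀ - ε / 4 - (x₀ + ε / 4) = -(ε / 2) by ring, abs_neg,
        abs_of_nonneg (by linarith)]
    linarith
  · intro p hp
    have hpball : p ∈ Metric.ball p₀ ε := by
      rcases hp with hp | hp
      · have : dist ((x₀ - ε / 4, t₀) : ℝ × ℝ) p₀ ≤ ε / 4 := by
          rw [Prod.dist_eq]
          apply max_le
          · rw [Real.dist_eq, show x₀ - ε / 4 - x₀ = -(ε / 4) by ring, abs_neg,
              abs_of_nonneg (by linarith)]
          · simp [p₀]; linarith
        exact Metric.ball_subset_ball' (by linarith) hp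
      · have : dist ((x₀ + ε / 4, t₀) : ℝ × ℝ) p₀ ≤ ε / 4 := by
          rw [Prod.dist_eq]
          apply max_le
          · rw [Real.dist_eq, show x₀ + ε / 4 - x₀ = ε / 4 by ring,
              abs_of_nonneg (by linarith)]
          · simp [p₀]; linarith
        exact Metric.ball_subset_ball' (by linarith) hp
    exact (hball hpball).1
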